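/- arXiv:1503.04995 — 2 statements merged into one kernel-verified Lean document; each statement's English description precedes it below -/
import Mathlib

section
/- Let q₋, q₊ ∈ S² with q₋ ≠ q₊, and define w : ℝ → ℝ³ by w(t) = |tanh t| · q₋ for t ≤ 0 and w(t) = |tanh t| · q₊ for t > 0. Then: (a) w is differentiable at every t ≠ 0 and ∫_ℝ [(‖w(t)‖² − 1)² + ‖w'(t)‖²] dt = 8/3 (the derivative taken at every t ≠ 0, which is almost every t); (b) there exists a map u : ℝ → ℝ³, differentiable at every point, with ‖u(t)‖ = 1 for all t and u(t) ∈ (S² ∩ q₋^⊥) ∪ (S² ∩ q₊^⊥) for all t, such that u(t) × u'(t) = w(t) for every t ∈ ℝ. -/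
open MeasureTheory Filter
open scoped RealInnerProductSpace

/-- The cross product on Euclidean `ℝ³`. -/
noncomputable def cross3 (a b : EuclideanSpace ℝ (Fin 3)) : EuclideanSpace ℝ (Fin 3) :=
  (WithLp.equiv 2 (Fin 3 → ℝ)).symm
    (crossProduct ((WithLp.equiv 2 (Fin 3 → ℝ)) a) ((WithLp.equiv 2 (Fin 3 → ℝ)) b))

section Aux
open Set
open scoped Matrix Topology

noncomputable section

-- tanh facts
lemma myHasDerivAt_tanh (x : ℝ) : HasDerivAt Real.tanh (1 - Real.tanh x ^ 2) x := by
  have h := (Real.hasDerivAt_sinh x).div (Real.hasDerivAt_cosh x) (Real.cosh_pos x).ne'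
  have hfun : (Real.sinh / Real.cosh) = Real.tanh := by
    funext y; rw [Real.tanh_eq_sinh_div_cosh]; rfl
  rw [hfun] at h
  refine h.congr_deriv ?_
  have hc := (Real.cosh_pos x).ne'
  rw [Real.tanh_eq_sinh_div_cosh]
  field_simp

lemma my_tanh_sq_lt_one (x : ℝ) : Real.tanh x ^ 2 < 1 := by
  have hc := Real.cosh_pos x
  rw [Real.tanh_eq_sinh_div_cosh, div_pow, div_lt_one (by positivity)]
  nlinarith [Real.cosh_sq_sub_sinh_sq x]

lemma my_tanh_nonpos {x : ℝ} (hx : x ≤ 0) : Real.tanh x ≤ 0 := by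
  rw [Real.tanh_eq_sinh_div_cosh]
  exact div_nonpos_of_nonpos_of_nonneg (Real.sinh_nonpos_iff.mpr hx) (Real.cosh_pos x).le

lemma my_tanh_nonneg {x : ℝ} (hx : 0 ≤ x) : 0 ≤ Real.tanh x := by
  rw [Real.tanh_eq_sinh_div_cosh]
  exact div_nonneg (Real.sinh_nonneg_iff.mpr hx) (Real.cosh_pos x).le

lemma my_tendsto_tanh_atTop : Tendsto Real.tanh atTop (𝓝 1) := by
  have h : ∀ x : ℝ, Real.tanh x = 1 - 2 / (Real.exp (2*x) + 1) := by
    intro x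
    have h1 : Real.exp (2*x) = Real.exp x * Real.exp x := by
      rw [← Real.exp_add]; ring_nf
    have h2 := (Real.exp_pos x).ne'
    have h4 : Real.exp (2*x) + 1 > 0 := by positivity
    rw [Real.tanh_eq_sinh_div_cosh, Real.sinh_eq, Real.cosh_eq, Real.exp_neg, h1]
    have h5 : Real.exp x + (Real.exp x)⁻¹ > 0 := by positivity
    field_simp
    ring
  have hexp : Tendsto (fun x : ℝ => Real.exp (2*x) + 1) atTop atTop :=
    tendsto_atTop_add_const_right _ 1 (Real.tendsto_exp_atTop.comp (tendsto_id.const_mul_atTop two_pos))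
  have h2 : Tendsto (fun x : ℝ => 2 / (Real.exp (2*x) + 1)) atTop (𝓝 0) :=
    Tendsto.div_atTop tendsto_const_nhds hexp
  have h3 := (tendsto_const_nhds (α := ℝ) (x := (1:ℝ)) (f := atTop)).sub h2
  rw [sub_zero] at h3
  exact h3.congr (fun x => (h x).symm)

abbrev E3 := EuclideanSpace ℝ (Fin 3)

noncomputable def eq3 : E3 ≃ (Fin 3 → ℝ) := WithLp.equiv 2 (Fin 3 → ℝ)

lemma my_inner_eq_dot (a b : E3) : ⟪a, b⟫ = (eq3 a) ⬝ᵥ (eq3 b) := by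
  simp [eq3, PiLp.inner_apply, RCLike.inner_apply, dotProduct, Fin.sum_univ_three, WithLp.equiv_apply]; ring

lemma my_lagrange (q v : Fin 3 → ℝ) :
    v ⨯₃ (q ⨯₃ v) = (v ⬝ᵥ v) • q - (v ⬝ᵥ q) • v := by
  funext i
  fin_cases i <;>
    simp [cross_apply, dotProduct, Fin.sum_univ_three] <;> ring

lemma my_cross3_expand (e q : E3) (he : ⟪e,e⟫ = 1) (hqe : ⟪q,e⟫ = 0) (a b a' b' : ℝ) :
    cross3 (a • e + b • cross3 q e) (a' • e + b' • cross3 q e) = (a*b' - b*a') • q := by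
  set e' := eq3 e with he'
  set q' := eq3 q with hq'
  have hdee : e' ⬝ᵥ e' = 1 := by rw [← my_inner_eq_dot]; exact he
  have hdqe : q' ⬝ᵥ e' = 0 := by rw [← my_inner_eq_dot]; exact hqe
  have hdeq : e' ⬝ᵥ q' = 0 := by rw [dotProduct_comm]; exact hdqe
  have hg : eq3 (cross3 q e) = q' ⨯₃ e' := by
    simp [cross3, eq3, he', hq']
  have h1 : eq3 (a • e + b • cross3 q e) = a • e' + b • (q' ⨯₃ e') := by
    simp [eq3, WithLp.ofLp_add, WithLp.ofLp_smul, ← hg]; rfl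
  have h2 : eq3 (a' • e + b' • cross3 q e) = a' • e' + b' • (q' ⨯₃ e') := by
    simp [eq3, WithLp.ofLp_add, WithLp.ofLp_smul, ← hg]; rfl
  have expand : (a • e' + b • (q' ⨯₃ e')) ⨯₃ (a' • e' + b' • (q' ⨯₃ e'))
      = (a*b' - b*a') • (e' ⨯₃ (q' ⨯₃ e')) := by
    have hanti : (q' ⨯₃ e') ⨯₃ e' = -(e' ⨯₃ (q' ⨯₃ e')) := by
      rw [← cross_anticomm]
    have hsm1 : ∀ (r : ℝ) (x y : Fin 3 → ℝ), (crossProduct (r • x)) y = r • (crossProduct x) y := by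
      intro r x y; rw [LinearMap.map_smul, LinearMap.smul_apply]
    have hsm2 : ∀ (r : ℝ) (x y : Fin 3 → ℝ), (crossProduct x) (r • y) = r • (crossProduct x) y := by
      intro r x y; rw [LinearMap.map_smul]
    simp only [map_add, LinearMap.add_apply, hsm1, hsm2, cross_self, smul_zero,
      add_zero, zero_add, hanti]
    module
  have hlag : e' ⨯₃ (q' ⨯₃ e') = q' := by
    rw [my_lagrange, hdee, hdeq, one_smul, zero_smul, sub_zero]
  show (WithLp.equiv 2 (Fin 3 → ℝ)).symm _ = _
  rw [show ((WithLp.equiv 2 (Fin 3 → ℝ)) (a • e + b • cross3 q e)) = eq3 (a • e + b • cross3 q e) from rfl,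
    show ((WithLp.equiv 2 (Fin 3 → ℝ)) (a' • e + b' • cross3 q e)) = eq3 (a' • e + b' • cross3 q e) from rfl,
    h1, h2, expand, hlag]
  rw [show q' = eq3 q from rfl]
  simp [eq3, WithLp.toLp_smul]

lemma my_norm_comb (e f : E3) (he : ⟪e,e⟫ = 1) (hf : ⟪f,f⟫ = 1) (hef : ⟪e,f⟫ = 0)
    (a b : ℝ) : ‖a • e + b • f‖ ^ 2 = a ^ 2 + b ^ 2 := by
  have hfe : ⟪f,e⟫ = 0 := by rw [real_inner_comm]; exact hef
  rw [← real_inner_self_eq_norm_sq]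
  simp only [inner_add_left, inner_add_right, real_inner_smul_left, real_inner_smul_right,
    he, hf, hef, hfe, mul_zero, add_zero, zero_add, mul_one]
  ring

lemma my_exists_orth (qm qp : E3) : ∃ e : E3, ‖e‖ = 1 ∧ ⟪qm, e⟫ = 0 ∧ ⟪qp, e⟫ = 0 := by
  set K := Submodule.span ℝ (Set.range ![qm, qp]) with hK
  have hfr : Module.finrank ℝ K ≤ 2 := by
    simpa [Set.finrank] using finrank_range_le_card ![qm, qp]
  have hne : Kᗮ ≠ ⊥ := by
    intro h
    rw [Submodule.orthogonal_eq_bot_iff] at h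
    rw [h] at hfr
    simp [finrank_top, finrank_euclideanSpace_fin] at hfr
  obtain ⟨x, hxK, hx0⟩ := Submodule.exists_mem_ne_zero_of_ne_bot hne
  refine ⟨(‖x‖⁻¹ : ℝ) • x, norm_smul_inv_norm hx0, ?_, ?_⟩
  · rw [real_inner_smul_right, (Submodule.mem_orthogonal K x).mp hxK qm
      (Submodule.subset_span ⟨0, rfl⟩), mul_zero]
  · rw [real_inner_smul_right, (Submodule.mem_orthogonal K x).mp hxK qp
      (Submodule.subset_span ⟨1, rfl⟩), mul_zero]

def gE : ℝ → ℝ := fun t => 2*(Real.tanh t - Real.tanh t ^ 3 / 3)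
def gD : ℝ → ℝ := fun t => 2*(1 - Real.tanh t ^ 2) ^ 2

lemma gE_hasDeriv (t : ℝ) : HasDerivAt gE (gD t) t := by
  have h := myHasDerivAt_tanh t
  have h2 := (h.sub ((h.pow 3).div_const 3)).const_mul 2
  show HasDerivAt (fun t => 2*(Real.tanh t - Real.tanh t ^ 3 / 3)) _ t
  refine h2.congr_deriv ?_
  simp only [gD]
  ring

lemma gD_nonneg (t : ℝ) : 0 ≤ gD t := by unfold gD; positivity

lemma gD_even (t : ℝ) : gD (-t) = gD t := by simp [gD, Real.tanh_neg]

lemma gE_tendsto : Tendsto gE atTop (𝓝 (4/3)) := by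
  have h := ((my_tendsto_tanh_atTop.sub ((my_tendsto_tanh_atTop.pow 3).div_const 3)).const_mul 2)
  convert h using 2
  all_goals norm_num [gE]

lemma gE_zero : gE 0 = 0 := by simp [gE, Real.tanh_zero]

lemma gD_intOn_Ioi : IntegrableOn gD (Ioi 0) :=
  integrableOn_Ioi_deriv_of_nonneg' (fun x _ => gE_hasDeriv x)
    (fun x _ => gD_nonneg x) gE_tendsto

lemma gD_int_Ioi : ∫ x in Ioi (0:ℝ), gD x = 4/3 := by
  rw [integral_Ioi_of_hasDerivAt_of_nonneg' (fun x _ => gE_hasDeriv x)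
    (fun x _ => gD_nonneg x) gE_tendsto, gE_zero, sub_zero]

lemma gD_intOn_Iic : IntegrableOn gD (Iic (0:ℝ)) := by
  have A : MeasurableEmbedding (fun x : ℝ => -x) :=
    (Homeomorph.neg ℝ).isClosedEmbedding.measurableEmbedding
  have h := (MeasurePreserving.integrableOn_comp_preimage
    (Measure.measurePreserving_neg (volume : Measure ℝ)) A).2 gD_intOn_Ioi
  have h2 : IntegrableOn gD (Iio (0:ℝ)) := by
    have : (fun x : ℝ => gD (-x)) = gD := funext gD_even
    simpa [Set.neg_preimage, Set.neg_Ioi, Function.comp_def, this] using h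
  exact h2.congr_set_ae (Iio_ae_eq_Iic (a := (0:ℝ))).symm |>.congr_set_ae (by rfl)

lemma gD_int_Iic : ∫ x in Iic (0:ℝ), gD x = 4/3 := by
  have h1 : ∫ x in Iic (0:ℝ), gD x = ∫ x in Iic (0:ℝ), gD (-x) := by
    congr 1; funext x; rw [gD_even]
  rw [h1, integral_comp_neg_Iic, neg_zero, gD_int_Ioi]

lemma gD_integrable : Integrable gD := by
  rw [← integrableOn_univ, ← Set.Iic_union_Ioi (a := (0:ℝ))]
  exact gD_intOn_Iic.union gD_intOn_Ioi

lemma gD_lintegral : ∫⁻ t : ℝ, ENNReal.ofReal (gD t) = ENNReal.ofReal (8/3) := by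
  rw [← ofReal_integral_eq_lintegral_ofReal gD_integrable
    (Eventually.of_forall gD_nonneg)]
  congr 1
  rw [← intervalIntegral.integral_Iic_add_Ioi gD_intOn_Iic gD_intOn_Ioi, gD_int_Iic, gD_int_Ioi]
  norm_num

def ccR (t : ℝ) : ℝ := Real.cos (Real.log (Real.cosh t))
def ssR (t : ℝ) : ℝ := Real.sin (Real.log (Real.cosh t))

noncomputable def uu (e f g : E3) (t : ℝ) : E3 :=
  if t ≤ 0 then ccR t • e + (-(ssR t)) • f else ccR t • e + ssR t • g

noncomputable def uu' (e f g : E3) (t : ℝ) : E3 :=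
  if t ≤ 0 then (-(ssR t * Real.tanh t)) • e + (-(ccR t * Real.tanh t)) • f
  else (-(ssR t * Real.tanh t)) • e + (ccR t * Real.tanh t) • g

lemma hasDerivAt_logcosh (t : ℝ) :
    HasDerivAt (fun t => Real.log (Real.cosh t)) (Real.tanh t) t := by
  simpa [Real.tanh_eq_sinh_div_cosh] using
    (Real.hasDerivAt_cosh t).log (Real.cosh_pos t).ne'

lemma hasDerivAt_ccR (t : ℝ) : HasDerivAt ccR (-(ssR t * Real.tanh t)) t := by
  have := (Real.hasDerivAt_cos (Real.log (Real.cosh t))).comp t (hasDerivAt_logcosh t)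
  exact this.congr_deriv (by simp [ssR])

lemma hasDerivAt_ssR (t : ℝ) : HasDerivAt ssR (ccR t * Real.tanh t) t := by
  have := (Real.hasDerivAt_sin (Real.log (Real.cosh t))).comp t (hasDerivAt_logcosh t)
  exact this.congr_deriv (by simp [ccR])

lemma ccR_zero : ccR 0 = 1 := by simp [ccR]
lemma ssR_zero : ssR 0 = 0 := by simp [ssR]
lemma sq_ssR_add_sq_ccR (t : ℝ) : ssR t ^ 2 + ccR t ^ 2 = 1 :=
  Real.sin_sq_add_cos_sq _

lemma hasDerivAt_uu (e f g : E3) (t : ℝ) : HasDerivAt (uu e f g) (uu' e f g t) t := by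
  have hum : ∀ x : ℝ, HasDerivAt (fun t => ccR t • e + (-(ssR t)) • f)
      ((-(ssR x * Real.tanh x)) • e + (-(ccR x * Real.tanh x)) • f) x := fun x =>
    ((hasDerivAt_ccR x).smul_const e).add (((hasDerivAt_ssR x).neg).smul_const f)
  have hup : ∀ x : ℝ, HasDerivAt (fun t => ccR t • e + ssR t • g)
      ((-(ssR x * Real.tanh x)) • e + (ccR x * Real.tanh x) • g) x := fun x =>
    ((hasDerivAt_ccR x).smul_const e).add ((hasDerivAt_ssR x).smul_const g)
  rcases lt_trichotomy t 0 with h | h | h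
  · have : uu e f g =ᶠ[𝓝 t] (fun t => ccR t • e + (-(ssR t)) • f) := by
      filter_upwards [Iio_mem_nhds h] with x hx
      rw [uu, if_pos (le_of_lt hx)]
    rw [uu', if_pos h.le]
    exact (hum t).congr_of_eventuallyEq this
  · subst h
    have hval : uu' e f g 0 = 0 := by
      rw [uu', if_pos le_rfl]; simp [Real.tanh_zero]
    rw [hval]
    have h1 : HasDerivWithinAt (uu e f g) 0 (Iic 0) 0 := by
      have h := (hum 0).hasDerivWithinAt (s := Iic 0)
      rw [show (-(ssR 0 * Real.tanh 0)) • e + (-(ccR 0 * Real.tanh 0)) • f = 0 by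
        simp [Real.tanh_zero]] at h
      exact h.congr (fun x hx => by rw [uu, if_pos (mem_Iic.mp hx)]) (by rw [uu, if_pos le_rfl])
    have h2 : HasDerivWithinAt (uu e f g) 0 (Ici 0) 0 := by
      have h := (hup 0).hasDerivWithinAt (s := Ici 0)
      rw [show (-(ssR 0 * Real.tanh 0)) • e + (ccR 0 * Real.tanh 0) • g = 0 by
        simp [Real.tanh_zero]] at h
      refine h.congr (fun x hx => ?_) (by rw [uu, if_pos le_rfl]; simp [ccR_zero, ssR_zero])
      rw [uu]
      by_cases hx0 : x ≤ 0
      · have hx' : x = 0 := le_antisymm hx0 (mem_Ici.mp hx)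
        subst hx'
        rw [if_pos le_rfl]
        simp [ccR_zero, ssR_zero]
      · rw [if_neg hx0]
    have h3 := h1.union h2
    rw [Iic_union_Ici] at h3
    exact hasDerivWithinAt_univ.mp h3
  · have : uu e f g =ᶠ[𝓝 t] (fun t => ccR t • e + ssR t • g) := by
      filter_upwards [Ioi_mem_nhds h] with x hx
      rw [uu, if_neg (not_le.mpr hx)]
    rw [uu', if_neg (not_le.mpr h)]
    exact (hup t).congr_of_eventuallyEq this

/-- for distinct `q₋, q₊ ∈ S²`, the profile `w(t) = |tanh t|·q₋` for `t ≤ 0`,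
`w(t) = |tanh t|·q₊` for `t > 0`, is differentiable away from `0`, has energy exactly `8/3`,
and is the chirality `u × u'` of a differentiable spin field `u` with values in
`(S² ∩ q₋^⊥) ∪ (S² ∩ q₊^⊥)`. -/
theorem stmt3 (qm qp : EuclideanSpace ℝ (Fin 3)) (hqm : ‖qm‖ = 1) (hqp : ‖qp‖ = 1)
    (hne : qm ≠ qp)
    (w : ℝ → EuclideanSpace ℝ (Fin 3))
    (hw : ∀ t : ℝ, w t = if t ≤ 0 then |Real.tanh t| • qm else |Real.tanh t| • qp) :
    ((∀ t : ℝ, t ≠ 0 → DifferentiableAt ℝ w t) ∧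
      (∫⁻ t : ℝ, ENNReal.ofReal ((‖w t‖ ^ 2 - 1) ^ 2 + ‖deriv w t‖ ^ 2))
        = ENNReal.ofReal (8 / 3)) ∧
    ∃ u : ℝ → EuclideanSpace ℝ (Fin 3),
      (∀ t : ℝ, DifferentiableAt ℝ u t) ∧ (∀ t : ℝ, ‖u t‖ = 1) ∧
      (∀ t : ℝ, ⟪u t, qm⟫ = 0 ∨ ⟪u t, qp⟫ = 0) ∧
      (∀ t : ℝ, cross3 (u t) (deriv u t) = w t) := by
  classical
  -- Part A
  have hwnorm : ∀ t : ℝ, ‖w t‖ = |Real.tanh t| := by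
    intro t; rw [hw]; split_ifs <;> rw [norm_smul] <;> simp [hqm, hqp]
  have hdm : ∀ t : ℝ, t < 0 → HasDerivAt w ((-(1 - Real.tanh t ^ 2)) • qm) t := by
    intro t ht
    have hev : w =ᶠ[𝓝 t] (fun st => (-Real.tanh st) • qm) := by
      filter_upwards [Iio_mem_nhds ht] with st hst
      rw [hw st, if_pos (le_of_lt hst), abs_of_nonpos (my_tanh_nonpos (le_of_lt hst))]
    exact (((myHasDerivAt_tanh t).neg).smul_const qm).congr_of_eventuallyEq hev
  have hdp : ∀ t : ℝ, 0 < t → HasDerivAt w ((1 - Real.tanh t ^ 2) • qp) t := by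
    intro t ht
    have hev : w =ᶠ[𝓝 t] (fun st => Real.tanh st • qp) := by
      filter_upwards [Ioi_mem_nhds ht] with st hst
      rw [hw st, if_neg (not_le.mpr hst), abs_of_nonneg (my_tanh_nonneg (le_of_lt hst))]
    exact ((myHasDerivAt_tanh t).smul_const qp).congr_of_eventuallyEq hev
  have hdiff : ∀ t : ℝ, t ≠ 0 → DifferentiableAt ℝ w t := by
    intro t ht
    rcases ht.lt_or_gt with h | h
    · exact (hdm t h).differentiableAt
    · exact (hdp t h).differentiableAt
  have hlint : (∫⁻ t : ℝ, ENNReal.ofReal ((‖w t‖ ^ 2 - 1) ^ 2 + ‖deriv w t‖ ^ 2))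
      = ENNReal.ofReal (8 / 3) := by
    have h0 : ∀ᵐ t : ℝ, t ≠ 0 := by
      rw [ae_iff]
      have : {a : ℝ | ¬a ≠ 0} = {(0:ℝ)} := by ext t; simp
      rw [this, Real.volume_singleton]
    have hae : (fun t => ENNReal.ofReal ((‖w t‖ ^ 2 - 1) ^ 2 + ‖deriv w t‖ ^ 2))
        =ᵐ[volume] (fun t => ENNReal.ofReal (gD t)) := by
      filter_upwards [h0] with t ht
      have hT : ‖w t‖ ^ 2 = Real.tanh t ^ 2 := by rw [hwnorm]; exact sq_abs _
      have hD : ‖deriv w t‖ ^ 2 = (1 - Real.tanh t ^ 2) ^ 2 := by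
        rcases ht.lt_or_gt with h | h
        · rw [(hdm t h).deriv, norm_smul, hqm, mul_one, Real.norm_eq_abs, sq_abs, neg_sq]
        · rw [(hdp t h).deriv, norm_smul, hqp, mul_one, Real.norm_eq_abs, sq_abs]
      rw [hT, hD]
      show _ = ENNReal.ofReal (2*(1 - Real.tanh t ^ 2) ^ 2)
      congr 1
      ring
    rw [lintegral_congr_ae hae, gD_lintegral]
  refine ⟨⟨hdiff, hlint⟩, ?_⟩
  -- Part B
  obtain ⟨e, he1, hem, hep⟩ := my_exists_orth qm qp
  have hee : ⟪e, e⟫ = 1 := by rw [real_inner_self_eq_norm_sq, he1]; norm_num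
  have hqmqm : ⟪qm, qm⟫ = 1 := by rw [real_inner_self_eq_norm_sq, hqm]; norm_num
  have hqpqp : ⟪qp, qp⟫ = 1 := by rw [real_inner_self_eq_norm_sq, hqp]; norm_num
  have heqfm : eq3 (cross3 qm e) = (eq3 qm) ⨯₃ (eq3 e) := by simp [cross3, eq3]
  have heqfp : eq3 (cross3 qp e) = (eq3 qp) ⨯₃ (eq3 e) := by simp [cross3, eq3]
  have hdot_qme : (eq3 qm) ⬝ᵥ (eq3 e) = 0 := by rw [← my_inner_eq_dot]; exact hem
  have hdot_qpe : (eq3 qp) ⬝ᵥ (eq3 e) = 0 := by rw [← my_inner_eq_dot]; exact hep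
  have hdot_ee : (eq3 e) ⬝ᵥ (eq3 e) = 1 := by rw [← my_inner_eq_dot]; exact hee
  have hdot_qmqm : (eq3 qm) ⬝ᵥ (eq3 qm) = 1 := by rw [← my_inner_eq_dot]; exact hqmqm
  have hdot_qpqp : (eq3 qp) ⬝ᵥ (eq3 qp) = 1 := by rw [← my_inner_eq_dot]; exact hqpqp
  have hefm : ⟪e, cross3 qm e⟫ = 0 := by
    rw [my_inner_eq_dot, heqfm]; exact dot_cross_self _ _
  have hefp : ⟪e, cross3 qp e⟫ = 0 := by
    rw [my_inner_eq_dot, heqfp]; exact dot_cross_self _ _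
  have hfmfm : ⟪cross3 qm e, cross3 qm e⟫ = 1 := by
    rw [my_inner_eq_dot, heqfm, cross_dot_cross, hdot_qmqm, hdot_ee, hdot_qme,
      dotProduct_comm (eq3 e) (eq3 qm), hdot_qme]
    ring
  have hfpfp : ⟪cross3 qp e, cross3 qp e⟫ = 1 := by
    rw [my_inner_eq_dot, heqfp, cross_dot_cross, hdot_qpqp, hdot_ee, hdot_qpe,
      dotProduct_comm (eq3 e) (eq3 qp), hdot_qpe]
    ring
  have hfmqm : ⟪cross3 qm e, qm⟫ = 0 := by
    rw [my_inner_eq_dot, heqfm, dotProduct_comm]; exact dot_self_cross _ _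
  have hfpqp : ⟪cross3 qp e, qp⟫ = 0 := by
    rw [my_inner_eq_dot, heqfp, dotProduct_comm]; exact dot_self_cross _ _
  refine ⟨uu e (cross3 qm e) (cross3 qp e),
    fun t => (hasDerivAt_uu e _ _ t).differentiableAt, ?_, ?_, ?_⟩
  · -- norm one
    intro t
    have hsq : ‖uu e (cross3 qm e) (cross3 qp e) t‖ ^ 2 = 1 := by
      have h1 := sq_ssR_add_sq_ccR t
      rw [uu]
      by_cases h : t ≤ 0
      · rw [if_pos h, my_norm_comb e _ hee hfmfm hefm, neg_sq]; linarith
      · rw [if_neg h, my_norm_comb e _ hee hfpfp hefp]; linarith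
    calc ‖uu e (cross3 qm e) (cross3 qp e) t‖
        = Real.sqrt (‖uu e (cross3 qm e) (cross3 qp e) t‖ ^ 2) :=
          (Real.sqrt_sq (norm_nonneg _)).symm
      _ = 1 := by rw [hsq, Real.sqrt_one]
  · -- orthogonality
    intro t
    have hme : ⟪e, qm⟫ = 0 := by rw [real_inner_comm]; exact hem
    have hpe : ⟪e, qp⟫ = 0 := by rw [real_inner_comm]; exact hep
    rw [uu]
    by_cases h : t ≤ 0
    · left
      rw [if_pos h]
      simp only [inner_add_left, real_inner_smul_left, hme, hfmqm, mul_zero, add_zero]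
    · right
      rw [if_neg h]
      simp only [inner_add_left, real_inner_smul_left, hpe, hfpqp, mul_zero, add_zero]
  · -- cross product
    intro t
    rw [(hasDerivAt_uu e _ _ t).deriv, hw t, uu, uu']
    have h1 := sq_ssR_add_sq_ccR t
    by_cases h : t ≤ 0
    · rw [if_pos h, if_pos h, if_pos h, my_cross3_expand e qm hee hem]
      have hco : ccR t * (-(ccR t * Real.tanh t)) - (-(ssR t)) * (-(ssR t * Real.tanh t))
          = -Real.tanh t := by linear_combination (-Real.tanh t) * h1
      rw [hco, abs_of_nonpos (my_tanh_nonpos h)]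
    · rw [if_neg h, if_neg h, if_neg h, my_cross3_expand e qp hee hep]
      have hco : ccR t * (ccR t * Real.tanh t) - ssR t * (-(ssR t * Real.tanh t))
          = Real.tanh t := by linear_combination (Real.tanh t) * h1
      rw [hco, abs_of_nonneg (my_tanh_nonneg (le_of_not_ge h))]

end

end Aux
end

section
/- Let N ≥ 2, δ ∈ (0,1), θ₀ ∈ [0, π/2), and let u : {0,1,…,N} → ℝ³ satisfy ‖u^i‖ = 1 for all i, the periodic boundary condition ⟨u¹,u⁰⟩ = ⟨u^N,u^{N−1}⟩, and ⟨u^i,u^{i+1}⟩ ≥ cos θ₀ for all 0 ≤ i ≤ N−1. Define z^i := (u^i × u^{i+1})/√(2δ). Then H_δ(u) ≥ 2δ²·Σ_{i=0}^{N−2} ( ‖u^{i+1} − u^i‖²/(2δ) − 1 )² + (1 − tan²θ₀)·δ·Σ_{i=0}^{N−2} ‖z^{i+1} − z^i‖². -/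
open MeasureTheory Filter
open scoped RealInnerProductSpace

lemma inner3 (x y : EuclideanSpace ℝ (Fin 3)) : ⟪x, y⟫ = x 0 * y 0 + x 1 * y 1 + x 2 * y 2 := by
  simp [PiLp.inner_apply, Fin.sum_univ_three]
  ring

lemma cross3_apply (a b : EuclideanSpace ℝ (Fin 3)) (i : Fin 3) :
    cross3 a b i = ![a 1 * b 2 - a 2 * b 1, a 2 * b 0 - a 0 * b 2, a 0 * b 1 - a 1 * b 0] i := by
  simp [cross3, crossProduct]

lemma cross3_norm_sq (a b : EuclideanSpace ℝ (Fin 3)) :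
    ‖cross3 a b‖ ^ 2 = ‖a‖ ^ 2 * ‖b‖ ^ 2 - ⟪a, b⟫ ^ 2 := by
  rw [← real_inner_self_eq_norm_sq, ← real_inner_self_eq_norm_sq, ← real_inner_self_eq_norm_sq]
  simp only [inner3, cross3_apply]
  simp [Fin.isValue]
  ring

lemma cross3_inner_cross3 (a b c : EuclideanSpace ℝ (Fin 3)) :
    ⟪cross3 a b, cross3 b c⟫ = ⟪a, b⟫ * ⟪b, c⟫ - ⟪a, c⟫ * ‖b‖ ^ 2 := by
  rw [← real_inner_self_eq_norm_sq]
  simp only [inner3, cross3_apply]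
  simp [Fin.isValue]
  ring

lemma key_id (δ : ℝ) (a b c : EuclideanSpace ℝ (Fin 3))
    (ha : ‖a‖ = 1) (hb : ‖b‖ = 1) (hc : ‖c‖ = 1) :
    ‖c - (2 * (1 - δ)) • b + a‖ ^ 2
      = ((‖b - a‖ ^ 2 + ‖c - b‖ ^ 2) / 2 - 2 * δ) ^ 2
        + ‖cross3 b c - cross3 a b‖ ^ 2 := by
  have hA : ⟪a, a⟫ = 1 := by rw [real_inner_self_eq_norm_sq, ha]; norm_num
  have hB : ⟪b, b⟫ = 1 := by rw [real_inner_self_eq_norm_sq, hb]; norm_num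
  have hC : ⟪c, c⟫ = 1 := by rw [real_inner_self_eq_norm_sq, hc]; norm_num
  have h1 : ⟪cross3 a b, cross3 a b⟫ = 1 - ⟪a, b⟫ ^ 2 := by
    rw [real_inner_self_eq_norm_sq, cross3_norm_sq, ha, hb]; ring
  have h2 : ⟪cross3 b c, cross3 b c⟫ = 1 - ⟪b, c⟫ ^ 2 := by
    rw [real_inner_self_eq_norm_sq, cross3_norm_sq, hb, hc]; ring
  have h3 : ⟪cross3 a b, cross3 b c⟫ = ⟪a, b⟫ * ⟪b, c⟫ - ⟪a, c⟫ := by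
    rw [cross3_inner_cross3, hb]; ring
  rw [← real_inner_self_eq_norm_sq, ← real_inner_self_eq_norm_sq,
    ← real_inner_self_eq_norm_sq, ← real_inner_self_eq_norm_sq]
  simp only [inner_sub_left, inner_sub_right, inner_add_left, inner_add_right,
    real_inner_smul_left, real_inner_smul_right]
  rw [hA, hB, hC, h1, h2, real_inner_comm (cross3 a b) (cross3 b c), h3,
    real_inner_comm a b, real_inner_comm b c, real_inner_comm a c]
  ring

lemma tan_bound (θ p q s t : ℝ) (h0 : 0 ≤ θ) (h1 : θ < Real.pi / 2)
    (hp : Real.cos θ ≤ p) (hq : Real.cos θ ≤ q)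
    (hs : 0 ≤ s) (ht : 0 ≤ t) (hs2 : s ^ 2 = 1 - p ^ 2) (ht2 : t ^ 2 = 1 - q ^ 2) :
    (p - q) ^ 2 ≤ Real.tan θ ^ 2 * (t - s) ^ 2 := by
  have hπ := Real.pi_pos
  have hc : 0 < Real.cos θ := Real.cos_pos_of_mem_Ioo ⟨by linarith, h1⟩
  have hsin : 0 ≤ Real.sin θ := Real.sin_nonneg_of_nonneg_of_le_pi h0 (by linarith)
  have hsc : Real.sin θ ^ 2 = 1 - Real.cos θ ^ 2 := by
    have := Real.sin_sq_add_cos_sq θ; linarith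
  have hss : s ≤ Real.sin θ := by nlinarith
  have htt : t ≤ Real.sin θ := by nlinarith
  have hpq : (p - q) * (p + q) = (t - s) * (t + s) := by linear_combination hs2 - ht2
  have step1 : (p - q) ^ 2 * (2 * Real.cos θ) ^ 2 ≤ (p - q) ^ 2 * (p + q) ^ 2 := by
    have h2c : (2 * Real.cos θ) ^ 2 ≤ (p + q) ^ 2 := by
      apply pow_le_pow_left₀ (by positivity) (by linarith)
    exact mul_le_mul_of_nonneg_left h2c (sq_nonneg _)
  have step2 : (p - q) ^ 2 * (p + q) ^ 2 = (t - s) ^ 2 * (t + s) ^ 2 := by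
    rw [← mul_pow, ← mul_pow, hpq]
  have step3 : (t - s) ^ 2 * (t + s) ^ 2 ≤ (t - s) ^ 2 * (2 * Real.sin θ) ^ 2 := by
    have h2s : (t + s) ^ 2 ≤ (2 * Real.sin θ) ^ 2 := by
      apply pow_le_pow_left₀ (by positivity) (by linarith)
    exact mul_le_mul_of_nonneg_left h2s (sq_nonneg _)
  have hdiv : Real.tan θ ^ 2 * (t - s) ^ 2
      = (t - s) ^ 2 * Real.sin θ ^ 2 / Real.cos θ ^ 2 := by
    rw [Real.tan_eq_sin_div_cos]; field_simp
  rw [hdiv, le_div_iff₀ (by positivity)]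
  nlinarith [step1, step2, step3, hc, sq_nonneg (Real.cos θ)]

lemma perterm (δ θ₀ : ℝ) (hδ : 0 < δ) (hθ : 0 ≤ θ₀) (hθ' : θ₀ < Real.pi / 2)
    (a b c z₁ z₂ : EuclideanSpace ℝ (Fin 3))
    (ha : ‖a‖ = 1) (hb : ‖b‖ = 1) (hc : ‖c‖ = 1)
    (hab : Real.cos θ₀ ≤ ⟪a, b⟫) (hbc : Real.cos θ₀ ≤ ⟪b, c⟫)
    (hz₁ : z₁ = (Real.sqrt (2 * δ))⁻¹ • cross3 a b)
    (hz₂ : z₂ = (Real.sqrt (2 * δ))⁻¹ • cross3 b c) :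
    (‖b - a‖ ^ 2 - 2 * δ) ^ 2 / 4 + (‖c - b‖ ^ 2 - 2 * δ) ^ 2 / 4
      + (1 - Real.tan θ₀ ^ 2) * δ * ‖z₂ - z₁‖ ^ 2
      ≤ (1 / 2 : ℝ) * ‖c - (2 * (1 - δ)) • b + a‖ ^ 2 := by
  have hX : ‖b - a‖ ^ 2 = 2 - 2 * ⟪a, b⟫ := by
    rw [norm_sub_sq_real, ha, hb, real_inner_comm a b]; ring
  have hY : ‖c - b‖ ^ 2 = 2 - 2 * ⟪b, c⟫ := by
    rw [norm_sub_sq_real, hb, hc, real_inner_comm b c]; ring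
  have h2δ : (0 : ℝ) < 2 * δ := by linarith
  have hsq : Real.sqrt (2 * δ) ^ 2 = 2 * δ := Real.sq_sqrt (le_of_lt h2δ)
  have hsqpos : 0 < Real.sqrt (2 * δ) := Real.sqrt_pos.mpr h2δ
  have hZ : ‖z₂ - z₁‖ ^ 2 = ‖cross3 b c - cross3 a b‖ ^ 2 / (2 * δ) := by
    rw [hz₁, hz₂, ← smul_sub, norm_smul, mul_pow, Real.norm_eq_abs,
      abs_of_pos (inv_pos.mpr hsqpos), inv_pow, hsq]
    ring
  have hs2 : ‖cross3 a b‖ ^ 2 = 1 - ⟪a, b⟫ ^ 2 := by rw [cross3_norm_sq, ha, hb]; ring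
  have ht2 : ‖cross3 b c‖ ^ 2 = 1 - ⟪b, c⟫ ^ 2 := by rw [cross3_norm_sq, hb, hc]; ring
  have htb := tan_bound θ₀ ⟪a, b⟫ ⟪b, c⟫ ‖cross3 a b‖ ‖cross3 b c‖ hθ hθ' hab hbc
    (norm_nonneg _) (norm_nonneg _) hs2 ht2
  have hD : (‖cross3 b c‖ - ‖cross3 a b‖) ^ 2 ≤ ‖cross3 b c - cross3 a b‖ ^ 2 := by
    have h := abs_norm_sub_norm_le (cross3 b c) (cross3 a b)
    calc (‖cross3 b c‖ - ‖cross3 a b‖) ^ 2 = |‖cross3 b c‖ - ‖cross3 a b‖| ^ 2 := (sq_abs _).symm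
      _ ≤ ‖cross3 b c - cross3 a b‖ ^ 2 := pow_le_pow_left₀ (abs_nonneg _) h 2
  have hTD : Real.tan θ₀ ^ 2 * (‖cross3 b c‖ - ‖cross3 a b‖) ^ 2
      ≤ Real.tan θ₀ ^ 2 * ‖cross3 b c - cross3 a b‖ ^ 2 :=
    mul_le_mul_of_nonneg_left hD (sq_nonneg _)
  rw [key_id δ a b c ha hb hc, hX, hY, hZ]
  have hδD : (1 - Real.tan θ₀ ^ 2) * δ * (‖cross3 b c - cross3 a b‖ ^ 2 / (2 * δ))
      = (1 - Real.tan θ₀ ^ 2) * (‖cross3 b c - cross3 a b‖ ^ 2 / 2) := by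
    field_simp
  rw [hδD]
  nlinarith [htb, hTD]

/-- lower bound of the renormalized chain energy by the discrete
Modica–Mortola functional of the chirality, with gradient prefactor `1 − tan²θ₀`,
when consecutive spins form an angle at most `θ₀`. -/
theorem stmt6 (N : ℕ) (hN : 2 ≤ N) (δ : ℝ) (hδ : δ ∈ Set.Ioo (0 : ℝ) 1)
    (θ₀ : ℝ) (hθ₀ : θ₀ ∈ Set.Ico 0 (Real.pi / 2))
    (u : ℕ → EuclideanSpace ℝ (Fin 3)) (hu : ∀ i ≤ N, ‖u i‖ = 1)
    (hper : ⟪u 1, u 0⟫ = ⟪u N, u (N - 1)⟫)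
    (hangle : ∀ i ≤ N - 1, Real.cos θ₀ ≤ ⟪u i, u (i + 1)⟫)
    (z : ℕ → EuclideanSpace ℝ (Fin 3))
    (hz : ∀ i ≤ N - 1, z i = (Real.sqrt (2 * δ))⁻¹ • cross3 (u i) (u (i + 1))) :
    2 * δ ^ 2 * ∑ i ∈ Finset.range (N - 1),
          (‖u (i + 1) - u i‖ ^ 2 / (2 * δ) - 1) ^ 2
      + (1 - Real.tan θ₀ ^ 2) * δ * ∑ i ∈ Finset.range (N - 1), ‖z (i + 1) - z i‖ ^ 2
      ≤ (1 / 2 : ℝ) * ∑ i ∈ Finset.range (N - 1),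
          ‖u (i + 2) - (2 * (1 - δ)) • u (i + 1) + u i‖ ^ 2 := by
  obtain ⟨hδ0, hδ1⟩ := hδ
  obtain ⟨hθ0, hθ1⟩ := hθ₀
  set n := N - 1 with hn
  have hnN : n + 1 = N := by omega
  set G : ℕ → ℝ := fun i => (‖u (i + 1) - u i‖ ^ 2 - 2 * δ) ^ 2 / 4 with hG
  have key : ∀ i ∈ Finset.range n,
      G i + G (i + 1) + (1 - Real.tan θ₀ ^ 2) * δ * ‖z (i + 1) - z i‖ ^ 2
        ≤ (1 / 2 : ℝ) * ‖u (i + 2) - (2 * (1 - δ)) • u (i + 1) + u i‖ ^ 2 := by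
    intro i hi
    rw [Finset.mem_range] at hi
    have h2 : i + 1 + 1 = i + 2 := rfl
    have := perterm δ θ₀ hδ0 hθ0 hθ1 (u i) (u (i + 1)) (u (i + 2)) (z i) (z (i + 1))
      (hu i (by omega)) (hu (i + 1) (by omega)) (hu (i + 2) (by omega))
      (hangle i (by omega)) (hangle (i + 1) (by omega))
      (hz i (by omega)) (hz (i + 1) (by omega))
    simpa [hG, h2] using this
  have hsum := Finset.sum_le_sum key
  rw [Finset.sum_add_distrib, Finset.sum_add_distrib, ← Finset.mul_sum, ← Finset.mul_sum] at hsum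
  -- shift sum equality
  have hG0 : G n = G 0 := by
    have hNn : ⟪u (n + 1), u n⟫ = ⟪u 1, u 0⟫ := by rw [hnN]; exact hper.symm
    simp only [hG, Nat.zero_add]
    rw [norm_sub_sq_real, norm_sub_sq_real, hu (n + 1) (by omega), hu n (by omega),
      hu 0 (by omega), hu 1 (by omega), hNn]
  have hshift : ∑ i ∈ Finset.range n, G (i + 1) = ∑ i ∈ Finset.range n, G i := by
    have h1 := Finset.sum_range_succ' G n
    have h2 := Finset.sum_range_succ G n
    rw [h2, hG0] at h1
    linarith
  have hfirst : 2 * δ ^ 2 * ∑ i ∈ Finset.range n, (‖u (i + 1) - u i‖ ^ 2 / (2 * δ) - 1) ^ 2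
      = ∑ i ∈ Finset.range n, (G i + G (i + 1)) := by
    rw [Finset.sum_add_distrib, hshift, Finset.mul_sum, ← Finset.sum_add_distrib]
    apply Finset.sum_congr rfl
    intro i _
    have hδ' : (2 * δ) ≠ 0 := by positivity
    simp only [hG]
    field_simp
    ring
  rw [hfirst]
  rw [Finset.sum_add_distrib]
  linarith [hsum]
end
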